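/- For vectors α, β ∈ ℤ^N define α ∧ β = Σ_{k=1}^{N} Σ_{j=1}^{k-1} (α_j β_k - α_k β_j). For 1 ≤ i < j ≤ N let P_{ij} be the transposition swapping coordinates i and j. If α, β ∈ ℤ^N satisfy α_l = (Pα)_l and β_l = (Pβ)_l for all i ≤ l ≤ j (where P is any permutation of coordinates), then (α - Pα) ∧ (β - P_{ij}β) + (α - P_{ij}α) ∧ (β - Pβ) = 0. -/
import Mathlib


/-- The antisymmetric pairing `α ∧ β = Σ_{j<k}(α_j β_k − α_k β_j)`. -/
def wedge {N : ℕ} (α β : Fin N → ℤ) : ℤ :=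
  ∑ k : Fin N, ∑ j ∈ Finset.Iio k, (α j * β k - α k * β j)

/-- The action of a permutation on vectors by permuting coordinates. -/
def permAct {N : ℕ} (P : Equiv.Perm (Fin N)) (α : Fin N → ℤ) : Fin N → ℤ :=
  α ∘ ⇑P⁻¹

lemma wedge_antisymm {N : ℕ} (α β : Fin N → ℤ) : wedge α β = - wedge β α := by
  unfold wedge
  rw [← Finset.sum_neg_distrib]
  refine Finset.sum_congr rfl fun k _ => ?_
  rw [← Finset.sum_neg_distrib]
  refine Finset.sum_congr rfl fun a _ => ?_
  ring

lemma wedge_rearrange {N : ℕ} (γ δ : Fin N → ℤ) :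
    wedge γ δ = ∑ k : Fin N, δ k * ((∑ a ∈ Finset.Iio k, γ a) - ∑ a ∈ Finset.Ioi k, γ a) := by
  unfold wedge
  have h1 : ∀ k : Fin N, ∑ a ∈ Finset.Iio k, (γ a * δ k - γ k * δ a)
      = δ k * (∑ a ∈ Finset.Iio k, γ a) - γ k * ∑ a ∈ Finset.Iio k, δ a := by
    intro k
    rw [Finset.sum_sub_distrib, ← Finset.sum_mul, ← Finset.mul_sum, mul_comm]
  simp_rw [h1, mul_sub, Finset.sum_sub_distrib]
  congr 1
  · have : ∑ k : Fin N, γ k * ∑ a ∈ Finset.Iio k, δ a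
        = ∑ k : Fin N, ∑ a ∈ Finset.Iio k, γ k * δ a := by
      simp_rw [Finset.mul_sum]
    rw [this]
    rw [Finset.sum_comm' (t' := Finset.univ) (s' := fun a => Finset.Ioi a)
      (fun k a => by simp)]
    simp_rw [Finset.mul_sum]
    refine Finset.sum_congr rfl fun a _ => ?_
    refine Finset.sum_congr rfl fun k _ => mul_comm _ _

lemma wedge_key {N : ℕ} (i j : Fin N) (hij : i < j) (γ δ : Fin N → ℤ)
    (hγ : ∀ l, i ≤ l → l ≤ j → γ l = 0)
    (hδ : ∀ l, l ≠ i → l ≠ j → δ l = 0)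
    (hsum : δ i + δ j = 0) : wedge γ δ = 0 := by
  rw [wedge_rearrange]
  have hsub : ({i, j} : Finset (Fin N)) ⊆ Finset.univ := Finset.subset_univ _
  rw [← Finset.sum_subset hsub (fun x _ hx => by
    simp only [Finset.mem_insert, Finset.mem_singleton, not_or] at hx
    rw [hδ x hx.1 hx.2, zero_mul])]
  rw [Finset.sum_pair hij.ne]
  have hIio : ∑ a ∈ Finset.Iio i, γ a = ∑ a ∈ Finset.Iio j, γ a := by
    refine Finset.sum_subset (Finset.Iio_subset_Iio hij.le) (fun x hx hx' => ?_)
    simp only [Finset.mem_Iio] at hx hx'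
    exact hγ x (not_lt.mp hx') hx.le
  have hIoi : ∑ a ∈ Finset.Ioi i, γ a = ∑ a ∈ Finset.Ioi j, γ a := by
    refine (Finset.sum_subset (Finset.Ioi_subset_Ioi hij.le) (fun x hx hx' => ?_)).symm
    simp only [Finset.mem_Ioi] at hx hx'
    exact hγ x hx.le (not_lt.mp hx')
  rw [hIio, hIoi]
  have : δ j = -δ i := by linarith
  rw [this]; ring

/-- the inductive step (B.8) in Appendix B. If `α` and `β` are
fixed by `P` on the interval `[i,j]`, then the mixed wedge terms cancel. -/
theorem wedge_inductive_step {N : ℕ} (i j : Fin N) (hij : i < j)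
    (P : Equiv.Perm (Fin N)) (α β : Fin N → ℤ)
    (hα : ∀ l : Fin N, i ≤ l → l ≤ j → α l = permAct P α l)
    (hβ : ∀ l : Fin N, i ≤ l → l ≤ j → β l = permAct P β l) :
    wedge (α - permAct P α) (β - permAct (Equiv.swap i j) β)
      + wedge (α - permAct (Equiv.swap i j) α) (β - permAct P β) = 0 := by
  have hswap : ∀ (f : Fin N → ℤ), (∀ l, l ≠ i → l ≠ j → (f - permAct (Equiv.swap i j) f) l = 0)
      ∧ (f - permAct (Equiv.swap i j) f) i + (f - permAct (Equiv.swap i j) f) j = 0 := by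
    intro f
    constructor
    · intro l h1 h2
      simp [permAct, Equiv.swap_inv, Equiv.swap_apply_of_ne_of_ne h1 h2]
    · simp [permAct, Equiv.swap_inv]
  have h1 : wedge (α - permAct P α) (β - permAct (Equiv.swap i j) β) = 0 := by
    refine wedge_key i j hij _ _ (fun l hl1 hl2 => ?_) (hswap β).1 (hswap β).2
    simp [hα l hl1 hl2]
  have h2 : wedge (α - permAct (Equiv.swap i j) α) (β - permAct P β) = 0 := by
    rw [wedge_antisymm]
    rw [wedge_key i j hij _ _ (fun l hl1 hl2 => by simp [hβ l hl1 hl2]) (hswap α).1 (hswap α).2]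
    simp
  rw [h1, h2]; ring
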